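/- For the ferromagnetic q-state Potts model (q ≥ 2, β > 0) on the subgraph induced by a finite d-dimensional cube V ⊂ ℤ^d, the spectral gap of the Swendsen–Wang dynamics is at least the spectral gap of the isolated-vertices dynamics: λ(SW) ≥ λ(I_SW). -/

import Mathlib

open scoped BigOperators

attribute [local instance] Classical.propDecidable

/-- Vertices of the `d`-dimensional integer lattice `ℤ^d`. -/
abbrev Vtx (d : ℕ) := Fin d → ℤ

/-- Graph (ℓ¹) distance on `ℤ^d`. -/
def latDist {d : ℕ} (u v : Vtx d) : ℕ := ∑ i, (u i - v i).natAbs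

/-- Nearest-neighbor adjacency on `ℤ^d`. -/
def latAdj {d : ℕ} (u v : Vtx d) : Prop := latDist u v = 1

/-- `V` is a `d`-dimensional cube (axis-aligned box with equal sides) in `ℤ^d`. -/
def IsCube {d : ℕ} (V : Finset (Vtx d)) : Prop :=
  ∃ (x : Vtx d) (s : ℕ), ∀ y : Vtx d, y ∈ V ↔ ∀ i, x i ≤ y i ∧ y i < x i + (s : ℤ)

/-- Spin configurations on `V` with spin set `{1,…,q}`. -/
abbrev Conf {d : ℕ} (V : Finset (Vtx d)) (q : ℕ) := {x // x ∈ V} → Fin q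

/-- Unnormalized Potts weight: `exp(β · #{monochromatic edges of σ})`. -/
noncomputable def pottsWeight {d : ℕ} {V : Finset (Vtx d)} (q : ℕ) (β : ℝ)
    (σ : Conf V q) : ℝ :=
  Real.exp (β * ((∑ u : {x // x ∈ V}, ∑ v : {x // x ∈ V},
    if latAdj u.1 v.1 ∧ σ u = σ v then (1 : ℝ) else 0) / 2))

/-- The ferromagnetic `q`-state Potts measure on the subgraph of `ℤ^d` induced by `V`
(with free boundary): `π(σ) ∝ exp(β·|{e ∈ E : σ monochromatic on e}|)`. -/
noncomputable def potts {d : ℕ} (q : ℕ) (β : ℝ) (V : Finset (Vtx d)) : Conf V q → ℝ :=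
  fun σ => pottsWeight q β σ / ∑ σ' : Conf V q, pottsWeight q β σ'

/-- The set `E(σ)` of monochromatic edges of the configuration `σ`. -/
noncomputable def monoEdges {d : ℕ} {V : Finset (Vtx d)} {q : ℕ} (σ : Conf V q) :
    Finset (Sym2 {x // x ∈ V}) :=
  Finset.univ.filter fun e =>
    ∃ u v : {x // x ∈ V}, e = s(u, v) ∧ latAdj u.1 v.1 ∧ σ u = σ v

/-- The graph on `V` with edge set `A`. -/
def graphOf {d : ℕ} {V : Finset (Vtx d)} (A : Finset (Sym2 {x // x ∈ V})) :
    SimpleGraph {x // x ∈ V} where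
  Adj u v := u ≠ v ∧ s(u, v) ∈ A
  symm := by
    constructor
    intro u v h
    exact ⟨h.1.symm, by rw [Sym2.eq_swap]; exact h.2⟩
  loopless := by constructor; intro u h; exact h.1 rfl

/-- `c(A)`: the number of connected components of `(V, A)`. -/
noncomputable def compCount {d : ℕ} {V : Finset (Vtx d)}
    (A : Finset (Sym2 {x // x ∈ V})) : ℕ :=
  Nat.card (graphOf A).ConnectedComponent

/-- The isolated vertices of `(V, A)`. -/
noncomputable def isoVerts {d : ℕ} {V : Finset (Vtx d)}
    (A : Finset (Sym2 {x // x ∈ V})) : Finset {x // x ∈ V} :=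
  Finset.univ.filter fun v => ∀ e ∈ A, v ∉ e

/-- The Swendsen–Wang transition matrix:
`SW(σ,σ') = Σ_{A ⊆ E(σ)∩E(σ')} p^{|A|} (1−p)^{|E(σ)∖A|} q^{−c(A)}`, `p = 1 − e^{−β}`. -/
noncomputable def SWmat {d : ℕ} (q : ℕ) (β : ℝ) (V : Finset (Vtx d)) :
    Matrix (Conf V q) (Conf V q) ℝ :=
  Matrix.of fun σ σ' =>
    ∑ A ∈ (monoEdges σ ∩ monoEdges σ').powerset,
      (1 - Real.exp (-β)) ^ A.card * Real.exp (-β) ^ ((monoEdges σ).card - A.card)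
        * ((q : ℝ) ^ compCount A)⁻¹

/-- The isolated-vertices dynamics `I_SW`: add each monochromatic edge independently with
probability `p = 1 − e^{−β}`, then resample uniformly the spins of the isolated vertices. -/
noncomputable def ISWmat {d : ℕ} (q : ℕ) (β : ℝ) (V : Finset (Vtx d)) :
    Matrix (Conf V q) (Conf V q) ℝ :=
  Matrix.of fun σ σ' =>
    ∑ A ∈ (monoEdges σ).powerset,
      (1 - Real.exp (-β)) ^ A.card * Real.exp (-β) ^ ((monoEdges σ).card - A.card) *
        (if ∀ v : {x // x ∈ V}, v ∉ isoVerts A → σ' v = σ v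
         then ((q : ℝ) ^ (isoVerts A).card)⁻¹ else 0)

/-- Variance w.r.t. `μ`. -/
noncomputable def varMu {Ω : Type*} [Fintype Ω] (μ f : Ω → ℝ) : ℝ :=
  ∑ x, (f x - ∑ y, f y * μ y) ^ 2 * μ x

/-- Inner product in `L²(μ)`. -/
noncomputable def innerMu {Ω : Type*} [Fintype Ω] (μ f g : Ω → ℝ) : ℝ :=
  ∑ x, f x * g x * μ x

/-- Dirichlet form `⟨f, (I − P) f⟩_μ`. -/
noncomputable def dirichletForm {Ω : Type*} [Fintype Ω]
    (μ : Ω → ℝ) (P : Matrix Ω Ω ℝ) (f : Ω → ℝ) : ℝ :=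
  ∑ x, f x * (f x - P.mulVec f x) * μ x

/-- Spectral gap of a reversible positive semidefinite chain, via the variational
characterization `λ(P) = min { ⟨f,(I−P)f⟩_μ / Var_μ(f) : Var_μ(f) ≠ 0 }`. -/
noncomputable def gapD {Ω : Type*} [Fintype Ω] (μ : Ω → ℝ) (P : Matrix Ω Ω ℝ) : ℝ :=
  sInf {r : ℝ | ∃ f : Ω → ℝ, varMu μ f ≠ 0 ∧ r = dirichletForm μ P f / varMu μ f}

namespace SW8

open Finset

variable {d : ℕ} {V : Finset (Vtx d)} {q : ℕ}

lemma latAdj_symm {u v : Vtx d} (h : latAdj u v) : latAdj v u := by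
  unfold latAdj latDist at h ⊢
  rw [show (∑ i, (v i - u i).natAbs) = ∑ i, (u i - v i).natAbs from
    Finset.sum_congr rfl fun i _ => by rw [← Int.natAbs_neg, neg_sub]]
  exact h

lemma latAdj_irrefl (u : Vtx d) : ¬ latAdj u u := by
  simp [latAdj, latDist]

lemma mem_monoEdges_iff {σ : Conf V q} {u v : {x // x ∈ V}} :
    s(u, v) ∈ monoEdges σ ↔ latAdj u.1 v.1 ∧ σ u = σ v := by
  constructor
  · intro h
    obtain ⟨-, a, b, he, hadj, hσ⟩ := Finset.mem_filter.mp h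
    rcases Sym2.eq_iff.mp he with ⟨rfl, rfl⟩ | ⟨rfl, rfl⟩
    · exact ⟨hadj, hσ⟩
    · exact ⟨latAdj_symm hadj, hσ.symm⟩
  · rintro ⟨h1, h2⟩
    exact Finset.mem_filter.mpr ⟨Finset.mem_univ _, u, v, rfl, h1, h2⟩

lemma sum_ite_adj_eq (σ : Conf V q) :
    (∑ u : {x // x ∈ V}, ∑ v : {x // x ∈ V},
      if latAdj u.1 v.1 ∧ σ u = σ v then (1 : ℝ) else 0)
      = 2 * ((monoEdges σ).card : ℝ) := by
  classical
  rw [← Finset.sum_product']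
  rw [Finset.sum_boole]
  norm_cast
  rw [Finset.card_eq_sum_card_fiberwise
    (f := fun p : {x // x ∈ V} × {x // x ∈ V} => s(p.1, p.2)) (t := monoEdges σ)
    (fun p hp => by
      obtain ⟨-, hadj, hσ⟩ := Finset.mem_filter.mp hp
      exact mem_monoEdges_iff.mpr ⟨hadj, hσ⟩)]
  rw [Finset.sum_congr rfl (fun e he => ?_), Finset.sum_const, smul_eq_mul, mul_comm]
  obtain ⟨-, u, v, rfl, hadj, hσ⟩ := Finset.mem_filter.mp he
  have hne : u ≠ v := fun h => latAdj_irrefl v.1 (by rw [h] at hadj; exact hadj)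
  have hset : (((Finset.univ ×ˢ Finset.univ).filter
        (fun p : {x // x ∈ V} × {x // x ∈ V} => latAdj p.1.1 p.2.1 ∧ σ p.1 = σ p.2)).filter
          (fun p => s(p.1, p.2) = s(u, v))) = {(u, v), (v, u)} := by
    ext ⟨a, b⟩
    simp only [Finset.mem_filter, Finset.mem_insert, Finset.mem_singleton, Finset.mem_product,
      Finset.mem_univ, and_true, true_and, Prod.mk.injEq]
    constructor
    · rintro ⟨-, h⟩
      rcases Sym2.eq_iff.mp h with ⟨rfl, rfl⟩ | ⟨rfl, rfl⟩
      · exact Or.inl ⟨rfl, rfl⟩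
      · exact Or.inr ⟨rfl, rfl⟩
    · rintro (⟨rfl, rfl⟩ | ⟨rfl, rfl⟩)
      · exact ⟨⟨hadj, hσ⟩, rfl⟩
      · exact ⟨⟨latAdj_symm hadj, hσ.symm⟩, Sym2.eq_swap⟩
  rw [hset, Finset.card_insert_of_notMem (by simp [Prod.ext_iff, hne]),
    Finset.card_singleton]

lemma pottsWeight_eq (β : ℝ) (σ : Conf V q) :
    pottsWeight q β σ = Real.exp (β * ((monoEdges σ).card : ℝ)) := by
  unfold pottsWeight
  rw [sum_ite_adj_eq]
  congr 1
  ring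

end SW8
namespace SW8

variable {d : ℕ} {V : Finset (Vtx d)} {q : ℕ}

lemma spin_eq_of_mem {σ : Conf V q} {A : Finset (Sym2 {x // x ∈ V})}
    (hA : A ⊆ monoEdges σ) {u v : {x // x ∈ V}} (h : s(u, v) ∈ A) : σ u = σ v :=
  (mem_monoEdges_iff.mp (hA h)).2

lemma spin_eq_of_reachable {σ : Conf V q} {A : Finset (Sym2 {x // x ∈ V})}
    (hA : A ⊆ monoEdges σ) {u v : {x // x ∈ V}}
    (h : (graphOf A).Reachable u v) : σ u = σ v := by
  obtain ⟨w⟩ := h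
  induction w with
  | nil => rfl
  | cons hadj _ ih => exact (spin_eq_of_mem hA hadj.2).trans ih

lemma eq_of_iso_reachable {A : Finset (Sym2 {x // x ∈ V})} {v u : {x // x ∈ V}}
    (hv : v ∈ isoVerts A) (h : (graphOf A).Reachable v u) : u = v := by
  obtain ⟨-, hv2⟩ := Finset.mem_filter.mp hv
  obtain ⟨w⟩ := h
  cases w with
  | nil => rfl
  | cons hadj _ => exact absurd (Sym2.mem_mk_left _ _) (hv2 _ hadj.2)

/-- Restriction of a configuration to the non-isolated vertices. -/
def agres (A : Finset (Sym2 {x // x ∈ V})) (σ : Conf V q) :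
    {v : {x // x ∈ V} // v ∉ isoVerts A} → Fin q :=
  fun v => σ v.1

lemma transfer {σ σ' : Conf V q} {A : Finset (Sym2 {x // x ∈ V})}
    (hA : A ⊆ monoEdges σ) (hag : agres A σ' = agres A σ) :
    A ⊆ monoEdges σ' := by
  intro e he
  obtain ⟨-, a, b, rfl, hadj, -⟩ := Finset.mem_filter.mp (hA he)
  have ha : a ∉ isoVerts A := fun hmem =>
    (Finset.mem_filter.mp hmem).2 _ he (Sym2.mem_mk_left _ _)
  have hb : b ∉ isoVerts A := fun hmem =>
    (Finset.mem_filter.mp hmem).2 _ he (Sym2.mem_mk_right _ _)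
  have hσ : σ a = σ b := spin_eq_of_mem hA he
  have h1 : σ' a = σ a := congrFun hag ⟨a, ha⟩
  have h2 : σ' b = σ b := congrFun hag ⟨b, hb⟩
  exact mem_monoEdges_iff.mpr ⟨hadj, by rw [h1, h2, hσ]⟩

lemma agres_eq_iff {σ σ' : Conf V q} {A : Finset (Sym2 {x // x ∈ V})} :
    (∀ v : {x // x ∈ V}, v ∉ isoVerts A → σ' v = σ v) ↔ agres A σ' = agres A σ := by
  constructor
  · intro h; funext v; exact h v.1 v.2
  · intro h v hv; exact congrFun h ⟨v, hv⟩

lemma cancel (β : ℝ) {m a : ℕ} (ham : a ≤ m) :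
    Real.exp (β * (m : ℝ)) * ((1 - Real.exp (-β)) ^ a * Real.exp (-β) ^ (m - a))
      = (Real.exp β - 1) ^ a := by
  set E := Real.exp β with hE
  have hE0 : E ≠ 0 := (Real.exp_pos β).ne'
  have h1 : Real.exp (β * (m : ℝ)) = E ^ m := by rw [mul_comm, Real.exp_nat_mul]
  have h2 : Real.exp (-β) = E⁻¹ := Real.exp_neg β
  obtain ⟨b, rfl⟩ : ∃ b, m = a + b := ⟨m - a, by omega⟩
  rw [h1, h2, Nat.add_sub_cancel_left, pow_add]
  have h4 : E * (1 - E⁻¹) = E - 1 := by field_simp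
  calc E ^ a * E ^ b * ((1 - E⁻¹) ^ a * E⁻¹ ^ b)
      = (E * (1 - E⁻¹)) ^ a * (E * E⁻¹) ^ b := by rw [mul_pow, mul_pow]; ring
    _ = (E - 1) ^ a := by rw [h4, mul_inv_cancel₀ hE0, one_pow, mul_one]

lemma sum_powerset_x {γ : Type*} (β : ℝ) (s : Finset γ) :
    ∑ A ∈ s.powerset, (Real.exp β - 1) ^ A.card = Real.exp (β * (s.card : ℝ)) := by
  classical
  have h := Finset.prod_add (fun _ : γ => Real.exp β - 1) (fun _ => (1 : ℝ)) s
  simp only [Finset.prod_const, Finset.prod_const_one, one_pow, mul_one] at h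
  have h2 : Real.exp β - 1 + 1 = Real.exp β := by ring
  rw [h2] at h
  rw [← h, mul_comm, Real.exp_nat_mul]

lemma sum_powerset_eq_sum_univ {γ : Type*} [Fintype γ] (s : Finset γ) (g : Finset γ → ℝ) :
    ∑ A ∈ s.powerset, g A = ∑ A : Finset γ, if A ⊆ s then g A else 0 := by
  classical
  rw [← Finset.sum_filter]
  apply Finset.sum_congr _ (fun _ _ => rfl)
  ext A
  simp [Finset.mem_powerset]

end SW8
namespace SW8

variable {d : ℕ} {V : Finset (Vtx d)} {q : ℕ}

/-- Partition function. -/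
noncomputable def Zsum (q : ℕ) (β : ℝ) (V : Finset (Vtx d)) : ℝ :=
  ∑ σ' : Conf V q, pottsWeight q β σ'

lemma potts_eq (β : ℝ) (σ : Conf V q) :
    potts q β V σ = Real.exp (β * ((monoEdges σ).card : ℝ)) * (Zsum q β V)⁻¹ := by
  simp only [potts, Zsum, pottsWeight_eq, div_eq_mul_inv]

/-- `f` multiplied by the indicator that all edges of `A` are monochromatic. -/
noncomputable def hind (A : Finset (Sym2 {x // x ∈ V})) (f : Conf V q → ℝ) (σ : Conf V q) : ℝ :=
  if A ⊆ monoEdges σ then f σ else 0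

/-- Sum of `hind A f` over the fiber of `agres A` above `τ`. -/
noncomputable def Sfun (A : Finset (Sym2 {x // x ∈ V})) (f : Conf V q → ℝ)
    (τ : {v : {x // x ∈ V} // v ∉ isoVerts A} → Fin q) : ℝ :=
  ∑ σ : Conf V q, if agres A σ = τ then hind A f σ else 0

lemma quad_id (β : ℝ) (f : Conf V q → ℝ) :
    innerMu (potts q β V) f f
      = (Zsum q β V)⁻¹ * ∑ A : Finset (Sym2 {x // x ∈ V}),
          (Real.exp β - 1) ^ A.card * ∑ σ : Conf V q, hind A f σ * hind A f σ := by
  rw [innerMu]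
  have step : ∀ σ : Conf V q, f σ * f σ * potts q β V σ
      = ∑ A : Finset (Sym2 {x // x ∈ V}),
          (Zsum q β V)⁻¹ * ((Real.exp β - 1) ^ A.card * (hind A f σ * hind A f σ)) := by
    intro σ
    rw [potts_eq, ← sum_powerset_x β (monoEdges σ), sum_powerset_eq_sum_univ,
      Finset.sum_mul, Finset.mul_sum]
    refine Finset.sum_congr rfl fun A _ => ?_
    simp only [hind]
    split_ifs <;> ring
  rw [Finset.sum_congr rfl fun σ _ => step σ, Finset.sum_comm, Finset.mul_sum]
  refine Finset.sum_congr rfl fun A _ => ?_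
  simp only [← Finset.mul_sum]

lemma quad_SW (β : ℝ) (f : Conf V q → ℝ) :
    innerMu (potts q β V) f ((SWmat q β V).mulVec f)
      = (Zsum q β V)⁻¹ * ∑ A : Finset (Sym2 {x // x ∈ V}),
          (Real.exp β - 1) ^ A.card * (((q : ℝ) ^ compCount A)⁻¹ *
            ((∑ σ : Conf V q, hind A f σ) * (∑ σ : Conf V q, hind A f σ))) := by
  rw [innerMu]
  have step : ∀ σ : Conf V q, f σ * ((SWmat q β V).mulVec f σ) * potts q β V σ
      = ∑ σ' : Conf V q, ∑ A : Finset (Sym2 {x // x ∈ V}),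
          (Zsum q β V)⁻¹ * ((Real.exp β - 1) ^ A.card *
            (((q : ℝ) ^ compCount A)⁻¹ * (hind A f σ * hind A f σ'))) := by
    intro σ
    simp only [Matrix.mulVec, dotProduct, SWmat, Matrix.of_apply]
    rw [potts_eq]
    simp only [sum_powerset_eq_sum_univ]
    simp only [Finset.sum_mul, Finset.mul_sum]
    refine Finset.sum_congr rfl fun σ' _ => Finset.sum_congr rfl fun A _ => ?_
    by_cases h : A ⊆ monoEdges σ ∩ monoEdges σ'
    · rw [if_pos h]
      rw [Finset.subset_inter_iff] at h
      simp only [hind, if_pos h.1, if_pos h.2]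
      have hc : A.card ≤ (monoEdges σ).card := Finset.card_le_card h.1
      rw [← cancel β hc]
      ring
    · rw [if_neg h]
      rw [Finset.subset_inter_iff, not_and_or] at h
      rcases h with h | h <;> simp only [hind, if_neg h] <;> ring
  rw [Finset.sum_congr rfl fun σ _ => step σ]
  rw [Finset.sum_congr rfl fun σ _ => Finset.sum_comm, Finset.sum_comm, Finset.mul_sum]
  refine Finset.sum_congr rfl fun A _ => ?_
  rw [Finset.sum_mul_sum]
  simp only [← Finset.mul_sum, ← Finset.sum_mul]

lemma quad_ISW (β : ℝ) (f : Conf V q → ℝ) :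
    innerMu (potts q β V) f ((ISWmat q β V).mulVec f)
      = (Zsum q β V)⁻¹ * ∑ A : Finset (Sym2 {x // x ∈ V}),
          (Real.exp β - 1) ^ A.card * (((q : ℝ) ^ (isoVerts A).card)⁻¹ *
            ∑ τ : {v : {x // x ∈ V} // v ∉ isoVerts A} → Fin q, Sfun A f τ * Sfun A f τ) := by
  rw [innerMu]
  have step : ∀ σ : Conf V q, f σ * ((ISWmat q β V).mulVec f σ) * potts q β V σ
      = ∑ σ' : Conf V q, ∑ A : Finset (Sym2 {x // x ∈ V}),
          (Zsum q β V)⁻¹ * ((Real.exp β - 1) ^ A.card *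
            (((q : ℝ) ^ (isoVerts A).card)⁻¹ *
              (hind A f σ * (if agres A σ' = agres A σ then hind A f σ' else 0)))) := by
    intro σ
    simp only [Matrix.mulVec, dotProduct, ISWmat, Matrix.of_apply]
    rw [potts_eq]
    simp only [sum_powerset_eq_sum_univ]
    simp only [Finset.sum_mul, Finset.mul_sum]
    refine Finset.sum_congr rfl fun σ' _ => Finset.sum_congr rfl fun A _ => ?_
    by_cases h1 : A ⊆ monoEdges σ
    · rw [if_pos h1]
      by_cases h2 : ∀ v : {x // x ∈ V}, v ∉ isoVerts A → σ' v = σ v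
      · have hag : agres A σ' = agres A σ := agres_eq_iff.mp h2
        have h1' : A ⊆ monoEdges σ' := transfer h1 hag
        rw [if_pos h2, if_pos hag]
        simp only [hind, if_pos h1, if_pos h1']
        have hc : A.card ≤ (monoEdges σ).card := Finset.card_le_card h1
        rw [← cancel β hc]
        ring
      · rw [if_neg h2, if_neg (fun hag => h2 (agres_eq_iff.mpr hag))]
        ring
    · rw [if_neg h1]
      simp only [hind, if_neg h1]
      ring
  rw [Finset.sum_congr rfl fun σ _ => step σ]
  rw [Finset.sum_congr rfl fun σ _ => Finset.sum_comm, Finset.sum_comm, Finset.mul_sum]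
  refine Finset.sum_congr rfl fun A _ => ?_
  -- per-A: Σ_σ Σ_σ' Z⁻¹ * (x * (qk⁻¹ * (hσ * ite))) = Z⁻¹ * (x * (qk⁻¹ * Σ_τ Sτ*Sτ))
  have inner_eq : ∀ σ : Conf V q,
      (∑ σ' : Conf V q, if agres A σ' = agres A σ then hind A f σ' else 0)
        = Sfun A f (agres A σ) := fun σ => rfl
  have key : ∑ σ : Conf V q, hind A f σ * Sfun A f (agres A σ)
      = ∑ τ : {v : {x // x ∈ V} // v ∉ isoVerts A} → Fin q, Sfun A f τ * Sfun A f τ := by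
    rw [← Finset.sum_fiberwise Finset.univ (agres A)
      (fun σ => hind A f σ * Sfun A f (agres A σ))]
    refine Finset.sum_congr rfl fun τ _ => ?_
    rw [Finset.sum_congr rfl (fun σ hσ => by
      rw [(Finset.mem_filter.mp hσ).2] :
        ∀ σ ∈ Finset.univ.filter (fun σ : Conf V q => agres A σ = τ),
          hind A f σ * Sfun A f (agres A σ) = hind A f σ * Sfun A f τ)]
    rw [← Finset.sum_mul]
    have hS : Sfun A f τ = ∑ σ ∈ Finset.univ.filter (fun σ : Conf V q => agres A σ = τ),
        hind A f σ := by
      rw [Finset.sum_filter]; rfl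
    rw [← hS]
  calc ∑ σ : Conf V q, ∑ σ' : Conf V q,
        (Zsum q β V)⁻¹ * ((Real.exp β - 1) ^ A.card *
          (((q : ℝ) ^ (isoVerts A).card)⁻¹ *
            (hind A f σ * (if agres A σ' = agres A σ then hind A f σ' else 0))))
      = (Zsum q β V)⁻¹ * ((Real.exp β - 1) ^ A.card *
          (((q : ℝ) ^ (isoVerts A).card)⁻¹ *
            (∑ σ : Conf V q, hind A f σ * Sfun A f (agres A σ)))) := by
        simp only [← Finset.mul_sum]
        congr 1
    _ = _ := by rw [key]

end SW8
namespace SW8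

variable {d : ℕ} {V : Finset (Vtx d)} {q : ℕ}

set_option maxHeartbeats 2000000 in
lemma card_T (hq : 0 < q) (A : Finset (Sym2 {x // x ∈ V})) (f : Conf V q → ℝ) :
    (Finset.univ.filter fun τ : {v : {x // x ∈ V} // v ∉ isoVerts A} → Fin q =>
        Sfun A f τ ≠ 0).card * q ^ (isoVerts A).card ≤ q ^ compCount A := by
  classical
  set G := graphOf A with hG
  set C₀ : Finset G.ConnectedComponent :=
    (isoVerts A).image (fun v => G.connectedComponentMk v) with hC₀def
  set T := Finset.univ.filter fun τ : {v : {x // x ∈ V} // v ∉ isoVerts A} → Fin q =>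
      Sfun A f τ ≠ 0 with hT
  haveI : Nonempty (Fin q) := ⟨⟨0, hq⟩⟩
  have hex : ∀ τ ∈ T, ∃ σ : Conf V q, agres A σ = τ ∧ A ⊆ monoEdges σ := by
    intro τ hτ
    have hS : Sfun A f τ ≠ 0 := (Finset.mem_filter.mp hτ).2
    obtain ⟨σ, -, hne⟩ := Finset.exists_ne_zero_of_sum_ne_zero hS
    by_cases h1 : agres A σ = τ
    · refine ⟨σ, h1, ?_⟩
      by_contra h2
      apply hne
      rw [if_pos h1]
      simp [hind, h2]
    · rw [if_neg h1] at hne; exact absurd rfl hne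
  let pick : ({v : {x // x ∈ V} // v ∉ isoVerts A} → Fin q) → Conf V q := fun τ =>
    if h : ∃ σ : Conf V q, agres A σ = τ ∧ A ⊆ monoEdges σ then h.choose
    else fun _ => Classical.arbitrary _
  have hpick : ∀ τ ∈ T, agres A (pick τ) = τ ∧ A ⊆ monoEdges (pick τ) := by
    intro τ hτ
    have h := hex τ hτ
    simp only [pick, dif_pos h]
    exact h.choose_spec
  -- every component of a non-isolated vertex avoids C₀
  have hnotC₀ : ∀ v : {v : {x // x ∈ V} // v ∉ isoVerts A},
      G.connectedComponentMk v.1 ∉ C₀ := by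
    intro v hmem
    obtain ⟨w, hw, hwe⟩ := Finset.mem_image.mp hmem
    have hr : G.Reachable w v.1 := SimpleGraph.ConnectedComponent.exact hwe
    have heq : v.1 = w := eq_of_iso_reachable hw hr
    exact v.2 (heq.symm ▸ hw)
  have hinj : T.card ≤ Fintype.card ({C : G.ConnectedComponent // C ∉ C₀} → Fin q) := by
    rw [← Finset.card_univ]
    apply Finset.card_le_card_of_injOn
      (fun τ => fun C : {C : G.ConnectedComponent // C ∉ C₀} => pick τ (Quot.out C.1))
      (fun _ _ => Finset.mem_univ _)
    intro τ₁ ht1 τ₂ ht2 heq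
    obtain ⟨ha1, hA1⟩ := hpick τ₁ (Finset.mem_coe.mp ht1)
    obtain ⟨ha2, hA2⟩ := hpick τ₂ (Finset.mem_coe.mp ht2)
    funext v
    set C : G.ConnectedComponent := G.connectedComponentMk v.1 with hC
    have hCmem : C ∉ C₀ := hnotC₀ v
    have hout : G.connectedComponentMk (Quot.out C) = C := Quot.out_eq C
    have hre : G.Reachable v.1 (Quot.out C) :=
      SimpleGraph.ConnectedComponent.exact (by rw [hout])
    have e1 : τ₁ v = pick τ₁ (Quot.out C) := by
      rw [← congrFun ha1 v]; exact spin_eq_of_reachable hA1 hre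
    have e2 : τ₂ v = pick τ₂ (Quot.out C) := by
      rw [← congrFun ha2 v]; exact spin_eq_of_reachable hA2 hre
    have := congrFun heq ⟨C, hCmem⟩
    rw [e1, e2]
    exact this
  have hC₀card : C₀.card = (isoVerts A).card := by
    apply Finset.card_image_of_injOn
    intro v hv w hw h
    exact (eq_of_iso_reachable hv (SimpleGraph.ConnectedComponent.exact h)).symm
  have hcc : compCount A = Fintype.card G.ConnectedComponent := by
    rw [compCount, Nat.card_eq_fintype_card]
  have hkc : (isoVerts A).card ≤ compCount A := by
    rw [← hC₀card, hcc, ← Finset.card_univ]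
    exact Finset.card_le_card (Finset.subset_univ _)
  have hcard : Fintype.card ({C : G.ConnectedComponent // C ∉ C₀} → Fin q)
      = q ^ (compCount A - (isoVerts A).card) := by
    rw [Fintype.card_fun, Fintype.card_fin]
    congr 1
    rw [Fintype.card_subtype_compl, Fintype.card_coe, hC₀card, hcc]
  calc T.card * q ^ (isoVerts A).card
      ≤ q ^ (compCount A - (isoVerts A).card) * q ^ (isoVerts A).card :=
        Nat.mul_le_mul_right _ (hinj.trans_eq hcard)
    _ = q ^ compCount A := by rw [← pow_add, Nat.sub_add_cancel hkc]

lemma sum_hind_eq_sum_Sfun (A : Finset (Sym2 {x // x ∈ V})) (f : Conf V q → ℝ) :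
    ∑ σ : Conf V q, hind A f σ
      = ∑ τ : {v : {x // x ∈ V} // v ∉ isoVerts A} → Fin q, Sfun A f τ := by
  classical
  rw [← Finset.sum_fiberwise Finset.univ (agres A) (hind A f)]
  refine Finset.sum_congr rfl fun τ _ => ?_
  rw [show Sfun A f τ = ∑ σ : Conf V q, if agres A σ = τ then hind A f σ else 0 from rfl,
    ← Finset.sum_filter]

lemma perA_1 (hq : 0 < q) (A : Finset (Sym2 {x // x ∈ V})) (f : Conf V q → ℝ) :
    ((q : ℝ) ^ compCount A)⁻¹ *
        ((∑ σ : Conf V q, hind A f σ) * (∑ σ : Conf V q, hind A f σ))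
      ≤ ((q : ℝ) ^ (isoVerts A).card)⁻¹ *
          ∑ τ : {v : {x // x ∈ V} // v ∉ isoVerts A} → Fin q, Sfun A f τ * Sfun A f τ := by
  classical
  set T := Finset.univ.filter fun τ : {v : {x // x ∈ V} // v ∉ isoVerts A} → Fin q =>
      Sfun A f τ ≠ 0 with hTdef
  set Y := ∑ τ : {v : {x // x ∈ V} // v ∉ isoVerts A} → Fin q, Sfun A f τ * Sfun A f τ with hY
  have hY0 : 0 ≤ Y := Finset.sum_nonneg fun τ _ => mul_self_nonneg _
  have hc : (0 : ℝ) < (q : ℝ) ^ compCount A := by positivity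
  have hk : (0 : ℝ) < (q : ℝ) ^ (isoVerts A).card := by positivity
  have hsupp : ∑ τ ∈ T, Sfun A f τ
      = ∑ τ : {v : {x // x ∈ V} // v ∉ isoVerts A} → Fin q, Sfun A f τ :=
    Finset.sum_filter_ne_zero _
  have h1 : (∑ σ : Conf V q, hind A f σ) * (∑ σ : Conf V q, hind A f σ)
      ≤ (T.card : ℝ) * Y := by
    rw [sum_hind_eq_sum_Sfun, ← hsupp, ← sq]
    calc (∑ τ ∈ T, Sfun A f τ) ^ 2 ≤ (T.card : ℝ) * ∑ τ ∈ T, Sfun A f τ ^ 2 :=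
          sq_sum_le_card_mul_sum_sq
      _ ≤ (T.card : ℝ) * Y := by
          apply mul_le_mul_of_nonneg_left _ (Nat.cast_nonneg _)
          rw [hY]
          calc ∑ τ ∈ T, Sfun A f τ ^ 2 = ∑ τ ∈ T, Sfun A f τ * Sfun A f τ := by
                refine Finset.sum_congr rfl fun τ _ => sq (Sfun A f τ) ▸ by ring
            _ ≤ _ := Finset.sum_le_sum_of_subset_of_nonneg (Finset.subset_univ _)
                (fun τ _ _ => mul_self_nonneg _)
  have hcast : (T.card : ℝ) * (q : ℝ) ^ (isoVerts A).card ≤ (q : ℝ) ^ compCount A := by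
    exact_mod_cast card_T hq A f
  have h2 : ((q : ℝ) ^ compCount A)⁻¹ * (T.card : ℝ)
      ≤ ((q : ℝ) ^ (isoVerts A).card)⁻¹ := by
    have hdiv : (T.card : ℝ) / (q : ℝ) ^ compCount A ≤ 1 / (q : ℝ) ^ (isoVerts A).card := by
      rw [div_le_div_iff₀ hc hk]
      linarith
    calc ((q : ℝ) ^ compCount A)⁻¹ * (T.card : ℝ)
        = (T.card : ℝ) / (q : ℝ) ^ compCount A := by ring
      _ ≤ 1 / (q : ℝ) ^ (isoVerts A).card := hdiv
      _ = ((q : ℝ) ^ (isoVerts A).card)⁻¹ := one_div _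
  calc ((q : ℝ) ^ compCount A)⁻¹ *
        ((∑ σ : Conf V q, hind A f σ) * (∑ σ : Conf V q, hind A f σ))
      ≤ ((q : ℝ) ^ compCount A)⁻¹ * ((T.card : ℝ) * Y) :=
        mul_le_mul_of_nonneg_left h1 (inv_nonneg.mpr hc.le)
    _ = (((q : ℝ) ^ compCount A)⁻¹ * (T.card : ℝ)) * Y := by ring
    _ ≤ ((q : ℝ) ^ (isoVerts A).card)⁻¹ * Y := mul_le_mul_of_nonneg_right h2 hY0

lemma perA_2 (hq : 0 < q) (A : Finset (Sym2 {x // x ∈ V})) (f : Conf V q → ℝ) :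
    ((q : ℝ) ^ (isoVerts A).card)⁻¹ *
        ∑ τ : {v : {x // x ∈ V} // v ∉ isoVerts A} → Fin q, Sfun A f τ * Sfun A f τ
      ≤ ∑ σ : Conf V q, hind A f σ * hind A f σ := by
  classical
  have hk : (0 : ℝ) < (q : ℝ) ^ (isoVerts A).card := by positivity
  have key : ∀ τ : {v : {x // x ∈ V} // v ∉ isoVerts A} → Fin q,
      ((q : ℝ) ^ (isoVerts A).card)⁻¹ * (Sfun A f τ * Sfun A f τ)
        ≤ ∑ σ ∈ Finset.univ.filter (fun σ : Conf V q => agres A σ = τ),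
            hind A f σ * hind A f σ := by
    intro τ
    set s := Finset.univ.filter (fun σ : Conf V q => agres A σ = τ) with hs
    have hSτ : Sfun A f τ = ∑ σ ∈ s, hind A f σ := by
      rw [show Sfun A f τ = ∑ σ : Conf V q, if agres A σ = τ then hind A f σ else 0 from rfl,
        ← Finset.sum_filter]
    have hcard : (s.card : ℝ) ≤ (q : ℝ) ^ (isoVerts A).card := by
      have : s.card ≤ Fintype.card ({v : {x // x ∈ V} // v ∈ isoVerts A} → Fin q) := by
        rw [← Finset.card_univ]
        apply Finset.card_le_card_of_injOn
          (fun σ => fun v : {v : {x // x ∈ V} // v ∈ isoVerts A} => σ v.1)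
          (fun _ _ => Finset.mem_univ _)
        intro σ₁ h1 σ₂ h2 heq
        have hτ1 : agres A σ₁ = τ := (Finset.mem_filter.mp (Finset.mem_coe.mp h1)).2
        have hτ2 : agres A σ₂ = τ := (Finset.mem_filter.mp (Finset.mem_coe.mp h2)).2
        funext u
        by_cases hu : u ∈ isoVerts A
        · exact congrFun heq ⟨u, hu⟩
        · have := congrFun (hτ1.trans hτ2.symm) ⟨u, hu⟩
          exact this
      calc (s.card : ℝ) ≤ (Fintype.card ({v : {x // x ∈ V} // v ∈ isoVerts A} → Fin q) : ℝ) := by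
            exact_mod_cast this
        _ = (q : ℝ) ^ (isoVerts A).card := by
            rw [Fintype.card_fun, Fintype.card_fin, Fintype.card_coe]
            push_cast
            rfl
    have hnn : 0 ≤ ∑ σ ∈ s, hind A f σ * hind A f σ :=
      Finset.sum_nonneg fun σ _ => mul_self_nonneg _
    have hcs : (∑ σ ∈ s, hind A f σ) ^ 2 ≤ (s.card : ℝ) * ∑ σ ∈ s, hind A f σ ^ 2 :=
      sq_sum_le_card_mul_sum_sq
    have hsq : ∑ σ ∈ s, hind A f σ ^ 2 = ∑ σ ∈ s, hind A f σ * hind A f σ :=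
      Finset.sum_congr rfl fun σ _ => by ring
    calc ((q : ℝ) ^ (isoVerts A).card)⁻¹ * (Sfun A f τ * Sfun A f τ)
        = ((q : ℝ) ^ (isoVerts A).card)⁻¹ * (∑ σ ∈ s, hind A f σ) ^ 2 := by
          rw [hSτ]; ring
      _ ≤ ((q : ℝ) ^ (isoVerts A).card)⁻¹ *
            ((s.card : ℝ) * ∑ σ ∈ s, hind A f σ ^ 2) :=
          mul_le_mul_of_nonneg_left hcs (inv_nonneg.mpr hk.le)
      _ ≤ ((q : ℝ) ^ (isoVerts A).card)⁻¹ *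
            ((q : ℝ) ^ (isoVerts A).card * ∑ σ ∈ s, hind A f σ ^ 2) := by
          apply mul_le_mul_of_nonneg_left _ (inv_nonneg.mpr hk.le)
          apply mul_le_mul_of_nonneg_right hcard
          exact Finset.sum_nonneg fun σ _ => sq_nonneg _
      _ = ∑ σ ∈ s, hind A f σ ^ 2 := by
          rw [← mul_assoc, inv_mul_cancel₀ hk.ne', one_mul]
      _ = ∑ σ ∈ s, hind A f σ * hind A f σ := hsq
  calc ((q : ℝ) ^ (isoVerts A).card)⁻¹ *
        ∑ τ : {v : {x // x ∈ V} // v ∉ isoVerts A} → Fin q, Sfun A f τ * Sfun A f τ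
      = ∑ τ : {v : {x // x ∈ V} // v ∉ isoVerts A} → Fin q,
          ((q : ℝ) ^ (isoVerts A).card)⁻¹ * (Sfun A f τ * Sfun A f τ) := by
        rw [Finset.mul_sum]
    _ ≤ ∑ τ : {v : {x // x ∈ V} // v ∉ isoVerts A} → Fin q,
          ∑ σ ∈ Finset.univ.filter (fun σ : Conf V q => agres A σ = τ),
            hind A f σ * hind A f σ :=
        Finset.sum_le_sum fun τ _ => key τ
    _ = ∑ σ : Conf V q, hind A f σ * hind A f σ :=
        Finset.sum_fiberwise Finset.univ (agres A) _

end SW8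
namespace SW8

variable {d : ℕ} {V : Finset (Vtx d)} {q : ℕ}

lemma Zsum_pos (hq : 0 < q) (β : ℝ) : 0 < Zsum q β (V := V) := by
  haveI : Nonempty (Fin q) := ⟨⟨0, hq⟩⟩
  haveI : Nonempty (Conf V q) := ⟨fun _ => ⟨0, hq⟩⟩
  exact Finset.sum_pos (fun σ _ => Real.exp_pos _) Finset.univ_nonempty

lemma xpow_nonneg {β : ℝ} (hβ : 0 ≤ β) (n : ℕ) : 0 ≤ (Real.exp β - 1) ^ n :=
  pow_nonneg (sub_nonneg.mpr (Real.one_le_exp hβ)) n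

lemma inner_SW_le_ISW (hq : 0 < q) {β : ℝ} (hβ : 0 ≤ β) (f : Conf V q → ℝ) :
    innerMu (potts q β V) f ((SWmat q β V).mulVec f)
      ≤ innerMu (potts q β V) f ((ISWmat q β V).mulVec f) := by
  rw [quad_SW, quad_ISW]
  apply mul_le_mul_of_nonneg_left _ (inv_nonneg.mpr (Zsum_pos hq β).le)
  exact Finset.sum_le_sum fun A _ =>
    mul_le_mul_of_nonneg_left (perA_1 hq A f) (xpow_nonneg hβ _)

lemma inner_ISW_le_id (hq : 0 < q) {β : ℝ} (hβ : 0 ≤ β) (f : Conf V q → ℝ) :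
    innerMu (potts q β V) f ((ISWmat q β V).mulVec f)
      ≤ innerMu (potts q β V) f f := by
  rw [quad_ISW, quad_id]
  apply mul_le_mul_of_nonneg_left _ (inv_nonneg.mpr (Zsum_pos hq β).le)
  exact Finset.sum_le_sum fun A _ =>
    mul_le_mul_of_nonneg_left (perA_2 hq A f) (xpow_nonneg hβ _)

lemma dirichlet_eq {Ω : Type*} [Fintype Ω] (μ : Ω → ℝ) (P : Matrix Ω Ω ℝ) (f : Ω → ℝ) :
    dirichletForm μ P f = innerMu μ f f - innerMu μ f (P.mulVec f) := by
  rw [dirichletForm, innerMu, innerMu, ← Finset.sum_sub_distrib]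
  exact Finset.sum_congr rfl fun x _ => by ring

lemma potts_nonneg (hq : 0 < q) (β : ℝ) (σ : Conf V q) : 0 ≤ potts q β V σ := by
  rw [potts_eq]
  exact mul_nonneg (Real.exp_pos _).le (inv_nonneg.mpr (Zsum_pos hq β).le)

lemma varMu_nonneg (hq : 0 < q) (β : ℝ) (f : Conf V q → ℝ) :
    0 ≤ varMu (potts q β V) f :=
  Finset.sum_nonneg fun σ _ => mul_nonneg (sq_nonneg _) (potts_nonneg hq β σ)

lemma dirichlet_ISW_nonneg (hq : 0 < q) {β : ℝ} (hβ : 0 ≤ β) (f : Conf V q → ℝ) :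
    0 ≤ dirichletForm (potts q β V) (ISWmat q β V) f := by
  rw [dirichlet_eq]
  linarith [inner_ISW_le_id hq hβ f]

lemma dirichlet_le (hq : 0 < q) {β : ℝ} (hβ : 0 ≤ β) (f : Conf V q → ℝ) :
    dirichletForm (potts q β V) (ISWmat q β V) f
      ≤ dirichletForm (potts q β V) (SWmat q β V) f := by
  rw [dirichlet_eq, dirichlet_eq]
  linarith [inner_SW_le_ISW hq hβ f]

end SW8

/-- For the ferromagnetic `q`-state Potts model on a cube of `ℤ^d`, the Swendsen–Wang
dynamics has spectral gap at least that of the isolated-vertices dynamics: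
`λ(SW) ≥ λ(I_SW)`. -/
theorem statement8 (d q : ℕ) (β : ℝ) (hq : 2 ≤ q) (hβ : 0 < β)
    (V : Finset (Vtx d)) (hV : IsCube V) :
    gapD (potts q β V) (ISWmat q β V) ≤ gapD (potts q β V) (SWmat q β V) := by
  have hq0 : 0 < q := by omega
  by_cases hex : ∃ f : Conf V q → ℝ, varMu (potts q β V) f ≠ 0
  · obtain ⟨f₀, hf₀⟩ := hex
    rw [gapD, gapD]
    have hbdd : BddBelow {r : ℝ | ∃ f : Conf V q → ℝ, varMu (potts q β V) f ≠ 0 ∧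
        r = dirichletForm (potts q β V) (ISWmat q β V) f / varMu (potts q β V) f} := by
      refine ⟨0, fun r hr => ?_⟩
      obtain ⟨g, hg, rfl⟩ := hr
      exact div_nonneg (SW8.dirichlet_ISW_nonneg hq0 hβ.le g) (SW8.varMu_nonneg hq0 β g)
    have hmem : dirichletForm (potts q β V) (SWmat q β V) f₀ / varMu (potts q β V) f₀
        ∈ {r : ℝ | ∃ f : Conf V q → ℝ, varMu (potts q β V) f ≠ 0 ∧
            r = dirichletForm (potts q β V) (SWmat q β V) f / varMu (potts q β V) f} :=
      ⟨f₀, hf₀, rfl⟩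
    apply le_csInf ⟨_, hmem⟩
    rintro r ⟨g, hg, rfl⟩
    have hvpos : 0 < varMu (potts q β V) g :=
      lt_of_le_of_ne (SW8.varMu_nonneg hq0 β g) (Ne.symm hg)
    calc sInf {r : ℝ | ∃ f : Conf V q → ℝ, varMu (potts q β V) f ≠ 0 ∧
          r = dirichletForm (potts q β V) (ISWmat q β V) f / varMu (potts q β V) f}
        ≤ dirichletForm (potts q β V) (ISWmat q β V) g / varMu (potts q β V) g :=
          csInf_le hbdd ⟨g, hg, rfl⟩
      _ ≤ dirichletForm (potts q β V) (SWmat q β V) g / varMu (potts q β V) g := by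
          apply div_le_div_of_nonneg_right (SW8.dirichlet_le hq0 hβ.le g) hvpos.le
  · push_neg at hex
    have hempty : ∀ P : Matrix (Conf V q) (Conf V q) ℝ,
        {r : ℝ | ∃ f : Conf V q → ℝ, varMu (potts q β V) f ≠ 0 ∧
          r = dirichletForm (potts q β V) P f / varMu (potts q β V) f} = ∅ := by
      intro P
      ext r
      simp only [Set.mem_setOf_eq, Set.mem_empty_iff_false, iff_false, not_exists]
      rintro f ⟨hf, -⟩
      exact hf (hex f)
    rw [gapD, gapD, hempty, hempty]
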